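/- Let N_H ≥ 1, f ≥ 1, h ≥ 1 and 0 ≤ y ≤ f. The number of h-tuples (F_1, …, F_h) of N_H × f column-regular binary matrices whose set of initially extractable columns has cardinality at least y equals Σ_{e=y}^{f} Θ(N_H, f, h, e); equivalently, under the uniform distribution on all N_H^{h·f} such h-tuples, the probability that at least y columns are initially extractable equals Σ_{e=y}^{f} Θ(N_H, f, h, e) / N_H^{h·f}. -/

import Mathlib

/-- The weight of row `i` of a binary matrix `F`: the number of nonzero entries in row `i`. -/
def rowWeight {m n : ℕ} (F : Matrix (Fin m) (Fin n) Bool) (i : Fin m) : ℕ :=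
  (Finset.univ.filter (fun j => F i j = true)).card

/-- The weight of column `j` of a binary matrix `F`: the number of nonzero entries in column `j`. -/
def colWeight {m n : ℕ} (F : Matrix (Fin m) (Fin n) Bool) (j : Fin n) : ℕ :=
  (Finset.univ.filter (fun i => F i j = true)).card

/-- A binary matrix is column-regular if every column contains exactly one nonzero entry. -/
def ColRegular {m n : ℕ} (F : Matrix (Fin m) (Fin n) Bool) : Prop :=
  ∀ j, colWeight F j = 1

/-- A stopping matrix: a column-regular binary matrix with no row of weight one. -/
def IsStopping {m n : ℕ} (F : Matrix (Fin m) (Fin n) Bool) : Prop :=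
  ColRegular F ∧ ∀ i, rowWeight F i ≠ 1

instance {m n : ℕ} (F : Matrix (Fin m) (Fin n) Bool) : Decidable (ColRegular F) :=
  inferInstanceAs (Decidable (∀ j, colWeight F j = 1))

instance {m n : ℕ} (F : Matrix (Fin m) (Fin n) Bool) : Decidable (IsStopping F) :=
  inferInstanceAs (Decidable (ColRegular F ∧ ∀ i, rowWeight F i ≠ 1))

/-- `z m n` is the number of `m × n` stopping matrices. -/
def z (m n : ℕ) : ℕ :=
  Fintype.card {F : Matrix (Fin m) (Fin n) Bool // IsStopping F}

/-- `Psi h e b` is the number of `h`-tuples `(C 1, …, C h)` of subsets of a fixed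
`e`-element set with `|C i| = b i` for every `i` and whose union is the whole set. -/
def Psi (h e : ℕ) (b : Fin h → ℕ) : ℕ :=
  Fintype.card {C : Fin h → Finset (Fin e) //
    (∀ i, (C i).card = b i) ∧ Finset.univ.biUnion C = Finset.univ}

/-- In a column-regular matrix, column `j` is pivotal if the (unique) row containing the
nonzero entry of column `j` has weight one. -/
def Pivotal {m n : ℕ} (F : Matrix (Fin m) (Fin n) Bool) (j : Fin n) : Prop :=
  ∃ i, F i j = true ∧ rowWeight F i = 1

instance {m n : ℕ} (F : Matrix (Fin m) (Fin n) Bool) (j : Fin n) : Decidable (Pivotal F j) :=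
  inferInstanceAs (Decidable (∃ i, F i j = true ∧ rowWeight F i = 1))

/-- Given an `h`-tuple of matrices, column `j` is initially extractable if it is pivotal
in at least one matrix of the tuple. -/
def Extractable {m n h : ℕ} (G : Fin h → Matrix (Fin m) (Fin n) Bool) (j : Fin n) : Prop :=
  ∃ i, Pivotal (G i) j

instance {m n h : ℕ} (G : Fin h → Matrix (Fin m) (Fin n) Bool) (j : Fin n) :
    Decidable (Extractable G j) :=
  inferInstanceAs (Decidable (∃ i, Pivotal (G i) j))

/-- The count `Θ(N_H, f, h, e)` from Lemma 2. -/
def Theta (NH f h e : ℕ) : ℕ :=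
  f.choose e * ∑ b ∈ Fintype.piFinset (fun _ : Fin h => Finset.range (e + 1)),
    Psi h e b * ∏ i, (NH.choose (b i) * (b i).factorial * z (NH - b i) (f - b i))

set_option linter.unusedSectionVars false
open Finset
namespace Aux

variable {α β : Type*} [Fintype α] [Fintype β] [DecidableEq α] [DecidableEq β]

/-- fiber of a function as a finset -/
def fib (g : α → β) (i : β) : Finset α := univ.filter (fun j => g j = i)

def PivF (g : α → β) (j : α) : Prop := (fib g (g j)).card = 1
instance (g : α → β) (j : α) : Decidable (PivF g j) := by unfold PivF; infer_instance

def NoSing (g : α → β) : Prop := ∀ i, (fib g i).card ≠ 1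
instance (g : α → β) : Decidable (NoSing g) := by unfold NoSing; infer_instance

def pivSet (g : α → β) : Finset α := univ.filter (fun j => PivF g j)

def toMat {m n : ℕ} (g : Fin n → Fin m) : Matrix (Fin m) (Fin n) Bool :=
  fun i j => decide (g j = i)

lemma colreg_toMat {m n : ℕ} (g : Fin n → Fin m) : ColRegular (toMat g) := by
  intro j
  have : (univ.filter (fun i => toMat g i j = true)) = {g j} := by
    ext i; simp [toMat, eq_comm]
  simp [colWeight, this]

lemma toMat_bij {m n : ℕ} :
    Function.Bijective (fun g : Fin n → Fin m =>
      (⟨toMat g, colreg_toMat g⟩ : {F : Matrix (Fin m) (Fin n) Bool // ColRegular F})) := by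
  constructor
  · intro g g' hgg'
    have := congrArg Subtype.val hgg'
    funext j
    have h2 := congrFun (congrFun this (g j)) j
    simpa [toMat, eq_comm] using h2
  · rintro ⟨F, hF⟩
    have hex : ∀ j, ∃! i, F i j = true := by
      intro j
      have := hF j
      rw [colWeight, Finset.card_eq_one] at this
      obtain ⟨a, ha⟩ := this
      refine ⟨a, ?_, ?_⟩
      · have : a ∈ univ.filter (fun i => F i j = true) := ha ▸ mem_singleton_self a
        simpa using this
      · intro i hi
        have : i ∈ univ.filter (fun i => F i j = true) := by simpa using hi
        rw [ha] at this; simpa using this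
    refine ⟨fun j => Fintype.choose _ (hex j), ?_⟩
    ext : 1
    funext i j
    have hc := Fintype.choose_spec _ (hex j)
    simp only [toMat]
    by_cases hij : Fintype.choose _ (hex j) = i
    · rw [show F i j = true from hij ▸ hc]
      simp [hij]
    · rw [decide_eq_false hij]
      by_cases hF' : F i j = true
      · exact absurd ((hex j).unique hc hF') hij
      · exact (Bool.not_eq_true _ |>.mp hF').symm

lemma rowWeight_toMat {m n : ℕ} (g : Fin n → Fin m) (i : Fin m) :
    rowWeight (toMat g) i = (fib g i).card := by
  simp [rowWeight, toMat, fib]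

lemma pivotal_toMat {m n : ℕ} (g : Fin n → Fin m) (j : Fin n) :
    Pivotal (toMat g) j ↔ PivF g j := by
  constructor
  · rintro ⟨i, hi, hw⟩
    have : g j = i := by simpa [toMat] using hi
    rw [PivF, this]
    rw [rowWeight_toMat] at hw; exact hw
  · intro hp
    exact ⟨g j, by simp [toMat], by rw [rowWeight_toMat]; exact hp⟩


variable {α' β' : Type*} [Fintype α'] [Fintype β'] [DecidableEq α'] [DecidableEq β']

lemma fib_conj (eα : α ≃ α') (eβ : β ≃ β') (g : α → β) (b' : β') :
    fib (eβ ∘ g ∘ eα.symm) b' = (fib g (eβ.symm b')).map eα.toEmbedding := by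
  ext j'
  simp only [fib, mem_filter, mem_univ, true_and, Finset.mem_map, Equiv.coe_toEmbedding,
    Function.comp_apply]
  constructor
  · intro hb
    exact ⟨eα.symm j', by simp [← hb], by simp⟩
  · rintro ⟨j, hj, rfl⟩
    simp [hj]

lemma noSing_conj (eα : α ≃ α') (eβ : β ≃ β') (g : α → β) :
    NoSing (eβ ∘ g ∘ eα.symm) ↔ NoSing g := by
  constructor
  · intro hn i
    have := hn (eβ i)
    rwa [fib_conj, Finset.card_map, Equiv.symm_apply_apply] at this
  · intro hn i'
    rw [fib_conj, Finset.card_map]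
    exact hn _

lemma z_eq_card_noSing (m n : ℕ) :
    z m n = Fintype.card {g : Fin n → Fin m // NoSing g} := by
  refine (Fintype.card_congr ?_).symm
  refine Equiv.trans ?_ (Equiv.subtypeSubtypeEquivSubtypeInter ColRegular
    (fun F => ∀ i, rowWeight F i ≠ 1))
  exact (Equiv.ofBijective _ toMat_bij).subtypeEquiv (fun g => by
    constructor
    · intro hn i; show rowWeight (toMat g) i ≠ 1; rw [rowWeight_toMat]; exact hn i
    · intro hn i
      have : rowWeight (toMat g) i ≠ 1 := hn i
      rwa [rowWeight_toMat] at this)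

lemma card_noSing_eq_z :
    Fintype.card {g : α → β // NoSing g} = z (Fintype.card β) (Fintype.card α) := by
  rw [z_eq_card_noSing]
  refine Fintype.card_congr ?_
  refine Equiv.subtypeEquiv (Equiv.arrowCongr (Fintype.equivFin α) (Fintype.equivFin β)) ?_
  intro g
  have : (Fintype.equivFin β) ∘ g ∘ (Fintype.equivFin α).symm =
      Equiv.arrowCongr (Fintype.equivFin α) (Fintype.equivFin β) g := by
    funext x; simp [Equiv.arrowCongr]
  rw [← this, noSing_conj]

lemma mem_fib {g : α → β} {j : α} {r : β} : j ∈ fib g r ↔ g j = r := by simp [fib]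

lemma mem_pivSet {g : α → β} {j : α} : j ∈ pivSet g ↔ PivF g j := by simp [pivSet]

lemma pivFib {g : α → β} {j : α} (h : PivF g j) : fib g (g j) = {j} := by
  obtain ⟨a, ha⟩ := Finset.card_eq_one.mp h
  have hj : j ∈ fib g (g j) := mem_fib.mpr rfl
  rw [ha] at hj ⊢
  rw [Finset.mem_singleton] at hj
  rw [hj]

section Core
variable (C : Finset α) (u : {x // x ∈ C} ↪ β)

lemma fib_eq_singleton {g : α → β}
    (h1 : ∀ x : {x // x ∈ C}, g x.1 = u x) (h2 : ∀ j, j ∉ C → g j ∉ univ.map u)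
    (x : {x // x ∈ C}) : fib g (u x) = {x.1} := by
  ext j
  simp only [mem_fib, Finset.mem_singleton]
  constructor
  · intro hj
    by_cases hjC : j ∈ C
    · have h1' := h1 ⟨j, hjC⟩
      have heq : u ⟨j, hjC⟩ = u x := by rw [← h1']; exact hj
      exact congrArg Subtype.val (u.injective heq)
    · exact absurd (by rw [hj]; exact Finset.mem_map_of_mem u (mem_univ x)) (h2 j hjC)
  · rintro rfl
    exact h1 x

lemma fib_eq_map {g : α → β} (h1 : ∀ x : {x // x ∈ C}, g x.1 = u x) {r : β}
    (hr : r ∉ univ.map u) :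
    fib g r = (univ.filter (fun x : {j // j ∈ Cᶜ} => g x.1 = r)).map
      (Function.Embedding.subtype _) := by
  ext j
  simp only [mem_fib, Finset.mem_map, Function.Embedding.coe_subtype, mem_filter, mem_univ,
    true_and]
  constructor
  · intro hj
    have hjC : j ∉ C := by
      intro hjC
      apply hr
      have h1' : g j = u ⟨j, hjC⟩ := h1 ⟨j, hjC⟩
      rw [← hj, h1']
      exact Finset.mem_map_of_mem u (mem_univ _)
    exact ⟨⟨j, by simpa using hjC⟩, hj, rfl⟩
  · rintro ⟨x, hx, rfl⟩
    exact hx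

lemma pivSet_dichotomy {g : α → β}
    (h1 : ∀ x : {x // x ∈ C}, g x.1 = u x) (h2 : ∀ j, j ∉ C → g j ∉ univ.map u)
    (h3 : ∀ r, r ∉ univ.map u → (fib g r).card ≠ 1) :
    pivSet g = C := by
  ext j
  rw [mem_pivSet]
  constructor
  · intro hp
    by_contra hjC
    exact h3 _ (h2 j hjC) hp
  · intro hjC
    show (fib g (g j)).card = 1
    have h1' : g j = u ⟨j, hjC⟩ := h1 ⟨j, hjC⟩
    rw [h1', fib_eq_singleton C u h1 h2 ⟨j, hjC⟩]
    simp

lemma h2_of_pivSet {g : α → β} (hg : pivSet g = C)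
    (h1 : ∀ x : {x // x ∈ C}, g x.1 = u x) :
    ∀ j, j ∉ C → g j ∉ univ.map u := by
  intro j hjC hmem
  rw [Finset.mem_map] at hmem
  obtain ⟨x, -, hx⟩ := hmem
  have hpx : PivF g x.1 := mem_pivSet.mp (by rw [hg]; exact x.2)
  have : j ∈ fib g (g x.1) := by rw [mem_fib, h1 x, hx]
  rw [pivFib hpx, Finset.mem_singleton] at this
  rw [this] at hjC
  exact hjC x.2

lemma h3_of_pivSet {g : α → β} (hg : pivSet g = C)
    (h1 : ∀ x : {x // x ∈ C}, g x.1 = u x) :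
    ∀ r, r ∉ univ.map u → (fib g r).card ≠ 1 := by
  intro r hr hcard
  obtain ⟨j0, hj0⟩ := Finset.card_eq_one.mp hcard
  have hgj0 : g j0 = r := by
    have : j0 ∈ fib g r := by rw [hj0]; exact mem_singleton_self _
    exact mem_fib.mp this
  by_cases hj0C : j0 ∈ C
  · apply hr
    have h1' : g j0 = u ⟨j0, hj0C⟩ := h1 ⟨j0, hj0C⟩
    rw [← hgj0, h1']
    exact Finset.mem_map_of_mem u (mem_univ _)
  · have : PivF g j0 := by show (fib g (g j0)).card = 1; rw [hgj0, hcard]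
    have : j0 ∈ C := by rw [← hg]; exact mem_pivSet.mpr this
    exact hj0C this

lemma restrict_inj {g : α → β} (hg : pivSet g = C) :
    Function.Injective (fun x : {x // x ∈ C} => g x.1) := by
  intro x y hxy
  have hpx : PivF g x.1 := mem_pivSet.mp (by rw [hg]; exact x.2)
  have : y.1 ∈ fib g (g x.1) := mem_fib.mpr hxy.symm
  rw [pivFib hpx, Finset.mem_singleton] at this
  exact Subtype.ext this.symm


lemma fib_subtype_card (C : Finset α) (u : {x // x ∈ C} ↪ β) (g : α → β)
    (h1 : ∀ x : {x // x ∈ C}, g x.1 = u x)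
    (v : {j // j ∈ Cᶜ} → {r // r ∈ (univ.map u)ᶜ})
    (hv : ∀ x, (v x).1 = g x.1) (r : {r // r ∈ (univ.map u)ᶜ}) :
    (fib v r).card = (fib g r.1).card := by
  have hfv : fib v r = univ.filter (fun x : {j // j ∈ Cᶜ} => g x.1 = r.1) := by
    ext x
    simp only [mem_fib, mem_filter, mem_univ, true_and, Subtype.ext_iff, hv]
  rw [hfv, fib_eq_map C u h1 (Finset.mem_compl.mp r.2), Finset.card_map]

def rebuild (C : Finset α) (u : {x // x ∈ C} ↪ β)
    (v : {j // j ∈ Cᶜ} → {r // r ∈ (univ.map u)ᶜ}) : α → β :=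
  fun j => if h : j ∈ C then u ⟨j, h⟩ else (v ⟨j, Finset.mem_compl.mpr h⟩).1

lemma rebuild_h1 (C : Finset α) (u : {x // x ∈ C} ↪ β)
    (v : {j // j ∈ Cᶜ} → {r // r ∈ (univ.map u)ᶜ}) (x : {x // x ∈ C}) :
    rebuild C u v x.1 = u x := by
  simp only [rebuild, x.2, dif_pos]

lemma rebuild_h2 (C : Finset α) (u : {x // x ∈ C} ↪ β)
    (v : {j // j ∈ Cᶜ} → {r // r ∈ (univ.map u)ᶜ}) :
    ∀ j, j ∉ C → rebuild C u v j ∉ univ.map u := by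
  intro j hj
  simp only [rebuild, dif_neg hj]
  exact Finset.mem_compl.mp (v ⟨j, Finset.mem_compl.mpr hj⟩).2

lemma rebuild_hvg (C : Finset α) (u : {x // x ∈ C} ↪ β)
    (v : {j // j ∈ Cᶜ} → {r // r ∈ (univ.map u)ᶜ}) (x : {j // j ∈ Cᶜ}) :
    (v x).1 = rebuild C u v x.1 := by
  have hx : x.1 ∉ C := Finset.mem_compl.mp x.2
  simp only [rebuild, dif_neg hx]

lemma rebuild_pivSet (C : Finset α) (u : {x // x ∈ C} ↪ β)
    (v : {j // j ∈ Cᶜ} → {r // r ∈ (univ.map u)ᶜ}) (hv : NoSing v) :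
    pivSet (rebuild C u v) = C := by
  refine pivSet_dichotomy C u (rebuild_h1 C u v) (rebuild_h2 C u v) ?_
  intro r hr
  have : (fib v ⟨r, Finset.mem_compl.mpr hr⟩).card = (fib (rebuild C u v) r).card :=
    fib_subtype_card C u (rebuild C u v) (rebuild_h1 C u v) v (rebuild_hvg C u v)
      ⟨r, Finset.mem_compl.mpr hr⟩
  rw [← this]
  exact hv _

def coreEquiv (C : Finset α) (u : {x // x ∈ C} ↪ β) :
    {g : α → β // pivSet g = C ∧ ∀ x : {x // x ∈ C}, g x.1 = u x} ≃
    {v : {j // j ∈ Cᶜ} → {r // r ∈ (univ.map u)ᶜ} // NoSing v} where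
  toFun gp := ⟨fun x => ⟨gp.1 x.1, Finset.mem_compl.mpr
      (h2_of_pivSet C u gp.2.1 gp.2.2 x.1 (Finset.mem_compl.mp x.2))⟩, by
    intro r
    rw [fib_subtype_card C u gp.1 gp.2.2 _ (fun x => rfl) r]
    exact h3_of_pivSet C u gp.2.1 gp.2.2 r.1 (Finset.mem_compl.mp r.2)⟩
  invFun vp := ⟨rebuild C u vp.1,
    rebuild_pivSet C u vp.1 vp.2, rebuild_h1 C u vp.1⟩
  left_inv := by
    rintro ⟨g, hg, h1⟩
    apply Subtype.ext
    funext j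
    by_cases hj : j ∈ C
    · show (if h : j ∈ C then _ else _) = g j
      rw [dif_pos hj]
      exact (h1 ⟨j, hj⟩).symm
    · show (if h : j ∈ C then _ else _) = g j
      rw [dif_neg hj]
  right_inv := by
    rintro ⟨v, hv⟩
    apply Subtype.ext
    funext x
    apply Subtype.ext
    show rebuild C u v x.1 = (v x).1
    exact (rebuild_hvg C u v x).symm

lemma card_fiber (C : Finset α) (u : {x // x ∈ C} ↪ β) :
    Nat.card {g : α → β // pivSet g = C ∧ ∀ x : {x // x ∈ C}, g x.1 = u x} =
      z (Fintype.card β - C.card) (Fintype.card α - C.card) := by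
  have hcards : Nat.card {r // r ∈ (univ.map u)ᶜ} = Fintype.card β - C.card := by
    rw [Nat.card_eq_fintype_card, Fintype.card_coe, Finset.card_compl, Finset.card_map,
      Finset.card_univ, Fintype.card_coe]
  have hcards2 : Nat.card {j // j ∈ Cᶜ} = Fintype.card α - C.card := by
    rw [Nat.card_eq_fintype_card, Fintype.card_coe, Finset.card_compl]
  rw [Nat.card_congr (coreEquiv C u), Nat.card_eq_fintype_card, card_noSing_eq_z,
    ← Nat.card_eq_fintype_card, ← Nat.card_eq_fintype_card, hcards, hcards2]

end Core

lemma card_pivSet_eq (C : Finset α) :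
    Fintype.card {g : α → β // pivSet g = C} =
      (Fintype.card β).choose C.card * (C.card).factorial *
        z (Fintype.card β - C.card) (Fintype.card α - C.card) := by
  have key : ∀ u : {x // x ∈ C} ↪ β,
      Fintype.card {gp : {g : α → β // pivSet g = C} //
        (⟨fun x => gp.1 x.1, restrict_inj C gp.2⟩ : {x // x ∈ C} ↪ β) = u} =
      z (Fintype.card β - C.card) (Fintype.card α - C.card) := by
    intro u
    have e1 : {gp : {g : α → β // pivSet g = C} //
        (⟨fun x => gp.1 x.1, restrict_inj C gp.2⟩ : {x // x ∈ C} ↪ β) = u} ≃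
        {g : α → β // pivSet g = C ∧ ∀ x : {x // x ∈ C}, g x.1 = u x} := by
      refine Equiv.trans (Equiv.subtypeEquivRight ?_)
        (Equiv.subtypeSubtypeEquivSubtypeInter _ _)
      intro gp
      rw [DFunLike.ext_iff]
      rfl
    rw [← Nat.card_eq_fintype_card, Nat.card_congr e1, card_fiber C u]
  rw [Fintype.card_congr (Equiv.sigmaFiberEquiv
    (fun gp : {g : α → β // pivSet g = C} =>
      (⟨fun x => gp.1 x.1, restrict_inj C gp.2⟩ : {x // x ∈ C} ↪ β))).symm,
    Fintype.card_sigma]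
  simp only [key]
  rw [Finset.sum_const, Finset.card_univ, Fintype.card_embedding_eq, Fintype.card_coe,
    smul_eq_mul, Nat.descFactorial_eq_factorial_mul_choose, mul_comm (C.card.factorial)]

lemma nat_card_pivSet_eq (C : Finset α) :
    Nat.card {g : α → β // pivSet g = C} =
      (Fintype.card β).choose C.card * (C.card).factorial *
        z (Fintype.card β - C.card) (Fintype.card α - C.card) := by
  rw [Nat.card_eq_fintype_card]
  exact card_pivSet_eq C

lemma group_count {γ δ : Type*} [Fintype γ] [DecidableEq δ] (m : γ → δ)
    (p : γ → Prop) [DecidablePred p] (t : Finset δ) (hp : ∀ a, p a ↔ m a ∈ t) :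
    (univ.filter p).card = ∑ d ∈ t, (univ.filter (fun a => m a = d)).card := by
  have hmaps : ∀ a ∈ univ.filter p, m a ∈ t := fun a ha => (hp a).mp (mem_filter.mp ha).2
  rw [Finset.card_eq_sum_ones,
    ← Finset.sum_fiberwise_of_maps_to hmaps (fun _ => (1 : ℕ))]
  refine Finset.sum_congr rfl (fun d hd => ?_)
  rw [← Finset.card_eq_sum_ones]
  congr 1
  ext a
  simp only [mem_filter, mem_univ, true_and]
  exact ⟨fun hh => hh.2, fun hh => ⟨(hp a).mpr (by rw [hh]; exact hd), hh⟩⟩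

lemma nat_card_pi_subtype {ι : Type*} [Fintype ι] {κ : Type*}
    (p : ι → κ → Prop) :
    Nat.card {g : ι → κ // ∀ i, p i (g i)} = ∏ i, Nat.card {x : κ // p i x} := by
  rw [Nat.card_congr (Equiv.subtypePiEquivPi (p := p)), Nat.card_pi]

section Transfer
variable {f e : ℕ} (E : Finset (Fin f)) (hE : E.card = e)

/-- embedding of `Fin e` onto `E` -/
noncomputable def embE : Fin e ↪ Fin f :=
  ((finCongr hE.symm).trans E.equivFin.symm).toEmbedding.trans
    (Function.Embedding.subtype _)

lemma embE_mem (x : Fin e) : embE E hE x ∈ E := by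
  simp only [embE, Function.Embedding.trans_apply, Function.Embedding.coe_subtype]
  exact Subtype.mem _

lemma map_embE : univ.map (embE E hE) = E := by
  apply Finset.eq_of_subset_of_card_le
  · intro j hj
    rw [Finset.mem_map] at hj
    obtain ⟨x, -, rfl⟩ := hj
    exact embE_mem E hE x
  · rw [Finset.card_map, Finset.card_univ, Fintype.card_fin, hE]

noncomputable def pushE (s : Finset (Fin e)) : Finset (Fin f) := s.map (embE E hE)

noncomputable def pullE (t : Finset (Fin f)) : Finset (Fin e) :=
  univ.filter (fun x => embE E hE x ∈ t)

lemma pullE_pushE (s : Finset (Fin e)) : pullE E hE (pushE E hE s) = s := by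
  ext x
  simp only [pullE, pushE, mem_filter, mem_univ, true_and, Finset.mem_map' (embE E hE)]

lemma pushE_pullE {t : Finset (Fin f)} (ht : t ⊆ E) : pushE E hE (pullE E hE t) = t := by
  ext j
  simp only [pushE, pullE, Finset.mem_map, mem_filter, mem_univ, true_and]
  constructor
  · rintro ⟨x, hx, rfl⟩
    exact hx
  · intro hj
    have : j ∈ univ.map (embE E hE) := by rw [map_embE E hE]; exact ht hj
    rw [Finset.mem_map] at this
    obtain ⟨x, -, rfl⟩ := this
    exact ⟨x, hj, rfl⟩

lemma card_pushE (s : Finset (Fin e)) : (pushE E hE s).card = s.card :=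
  Finset.card_map _

lemma card_pullE {t : Finset (Fin f)} (ht : t ⊆ E) : (pullE E hE t).card = t.card := by
  rw [← pushE_pullE E hE ht, card_pushE, pullE_pushE]

lemma card_tuple_union (hE : E.card = e) (h : ℕ) (b : Fin h → ℕ) :
    (univ.filter (fun Cv : Fin h → Finset (Fin f) =>
      univ.biUnion Cv = E ∧ ∀ i, (Cv i).card = b i)).card = Psi h e b := by
  have hPsi : Psi h e b = (univ.filter (fun C : Fin h → Finset (Fin e) =>
      (∀ i, (C i).card = b i) ∧ univ.biUnion C = univ)).card :=
    Fintype.card_of_subtype _ (fun x => by simp)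
  rw [hPsi]
  refine Finset.card_bij' (fun Cv _ => fun i => pullE E hE (Cv i))
    (fun C _ => fun i => pushE E hE (C i)) ?_ ?_ ?_ ?_
  · intro Cv hCv
    have hCv' := (mem_filter.mp hCv).2
    have hsub : ∀ i, Cv i ⊆ E := by
      intro i
      rw [← hCv'.1]
      exact Finset.subset_biUnion_of_mem Cv (mem_univ i)
    refine mem_filter.mpr ⟨mem_univ _, fun i => ?_, ?_⟩
    · rw [card_pullE E hE (hsub i)]
      exact hCv'.2 i
    · ext x
      simp only [mem_univ, iff_true, Finset.mem_biUnion]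
      have hxE : embE E hE x ∈ E := embE_mem E hE x
      have hxE2 : embE E hE x ∈ univ.biUnion Cv := by rw [hCv'.1]; exact hxE
      rw [Finset.mem_biUnion] at hxE2
      obtain ⟨i, -, hi⟩ := hxE2
      refine ⟨i, trivial, ?_⟩
      simp only [pullE, mem_filter, mem_univ, true_and]
      exact hi
  · intro C hC
    have hC' := (mem_filter.mp hC).2
    refine mem_filter.mpr ⟨mem_univ _, ?_, fun i => ?_⟩
    · ext j
      rw [Finset.mem_biUnion]
      constructor
      · rintro ⟨i, -, hj⟩
        rw [pushE, Finset.mem_map] at hj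
        obtain ⟨x, -, rfl⟩ := hj
        exact embE_mem E hE x
      · intro hj
        have hjm : j ∈ univ.map (embE E hE) := by rw [map_embE E hE]; exact hj
        rw [Finset.mem_map] at hjm
        obtain ⟨x, -, rfl⟩ := hjm
        have hx : x ∈ univ.biUnion C := by rw [hC'.2]; exact mem_univ x
        rw [Finset.mem_biUnion] at hx
        obtain ⟨i, -, hx⟩ := hx
        exact ⟨i, mem_univ i, Finset.mem_map_of_mem _ hx⟩
    · rw [card_pushE]
      exact hC'.1 i
  · intro Cv hCv
    have hCv' := (mem_filter.mp hCv).2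
    have hsub : ∀ i, Cv i ⊆ E := by
      intro i
      rw [← hCv'.1]
      exact Finset.subset_biUnion_of_mem Cv (mem_univ i)
    dsimp only
    funext i
    exact pushE_pullE E hE (hsub i)
  · intro C hC
    dsimp only
    funext i
    exact pullE_pushE E hE (C i)

end Transfer
/-- the single-matrix count as a function of the pivotal-set size -/
def M (NH f b : ℕ) : ℕ := NH.choose b * b.factorial * z (NH - b) (f - b)

lemma count_pivvec (NH f h : ℕ) (Cv : Fin h → Finset (Fin f)) :
    (univ.filter (fun G : Fin h → (Fin f → Fin NH) =>
      (fun i => pivSet (G i)) = Cv)).card = ∏ i, M NH f (Cv i).card := by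
  have h1 : (univ.filter (fun G : Fin h → (Fin f → Fin NH) =>
      (fun i => pivSet (G i)) = Cv)).card =
      Nat.card {G : Fin h → (Fin f → Fin NH) // ∀ i, pivSet (G i) = Cv i} := by
    rw [Nat.card_eq_fintype_card,
      Fintype.card_of_subtype (univ.filter (fun G : Fin h → (Fin f → Fin NH) =>
        (fun i => pivSet (G i)) = Cv)) (fun G => by simp [funext_iff])]
  rw [h1, nat_card_pi_subtype (p := fun i g => pivSet g = Cv i)]
  refine Finset.prod_congr rfl (fun i _ => ?_)
  rw [nat_card_pivSet_eq (Cv i), Fintype.card_fin, Fintype.card_fin]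
  rfl

lemma count_per_E (NH f h e : ℕ) (E : Finset (Fin f)) (hE : E.card = e) :
    (univ.filter (fun G : Fin h → (Fin f → Fin NH) =>
      univ.biUnion (fun i => pivSet (G i)) = E)).card =
    ∑ b ∈ Fintype.piFinset (fun _ : Fin h => Finset.range (e + 1)),
      Psi h e b * ∏ i, M NH f (b i) := by
  classical
  set T : Finset (Fin h → Finset (Fin f)) :=
    univ.filter (fun Cv => univ.biUnion Cv = E) with hT
  rw [group_count (fun G : Fin h → (Fin f → Fin NH) => fun i => pivSet (G i)) _ T
    (fun G => by simp [hT])]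
  have hterm : ∀ Cv ∈ T, (univ.filter (fun G : Fin h → (Fin f → Fin NH) =>
      (fun i => pivSet (G i)) = Cv)).card = ∏ i, M NH f (Cv i).card :=
    fun Cv _ => count_pivvec NH f h Cv
  rw [Finset.sum_congr rfl hterm]
  have hmaps : ∀ Cv ∈ T, (fun i => (Cv i).card) ∈
      Fintype.piFinset (fun _ : Fin h => Finset.range (e + 1)) := by
    intro Cv hCv
    rw [Fintype.mem_piFinset]
    intro i
    rw [Finset.mem_range, Nat.lt_succ_iff, ← hE]
    refine Finset.card_le_card ?_
    rw [← (mem_filter.mp hCv).2]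
    exact Finset.subset_biUnion_of_mem Cv (mem_univ i)
  rw [← Finset.sum_fiberwise_of_maps_to hmaps (fun Cv => ∏ i, M NH f (Cv i).card)]
  refine Finset.sum_congr rfl (fun b hb => ?_)
  have hconst : ∀ Cv ∈ T.filter (fun Cv => (fun i => (Cv i).card) = b),
      (∏ i, M NH f (Cv i).card) = ∏ i, M NH f (b i) := by
    intro Cv hCv
    have := (mem_filter.mp hCv).2
    refine Finset.prod_congr rfl (fun i _ => ?_)
    rw [congrFun this i]
  rw [Finset.sum_congr rfl hconst, Finset.sum_const, smul_eq_mul]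
  congr 1
  rw [← card_tuple_union E hE h b]
  congr 1
  ext Cv
  simp only [hT, mem_filter, mem_univ, true_and, funext_iff]
  try tauto

lemma count_per_e (NH f h e : ℕ) :
    (univ.filter (fun G : Fin h → (Fin f → Fin NH) =>
      (univ.biUnion (fun i => pivSet (G i))).card = e)).card = Theta NH f h e := by
  classical
  rw [group_count (fun G : Fin h → (Fin f → Fin NH) => univ.biUnion (fun i => pivSet (G i)))
    _ (Finset.powersetCard e (univ : Finset (Fin f)))
    (fun G => (Finset.mem_powersetCard_univ).symm)]
  have hterm : ∀ E ∈ Finset.powersetCard e (univ : Finset (Fin f)),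
      (univ.filter (fun G : Fin h → (Fin f → Fin NH) =>
        univ.biUnion (fun i => pivSet (G i)) = E)).card =
      ∑ b ∈ Fintype.piFinset (fun _ : Fin h => Finset.range (e + 1)),
        Psi h e b * ∏ i, M NH f (b i) := by
    intro E hEm
    exact count_per_E NH f h e E (Finset.mem_powersetCard_univ.mp hEm)
  rw [Finset.sum_congr rfl hterm, Finset.sum_const, smul_eq_mul,
    Finset.card_powersetCard, Finset.card_univ, Fintype.card_fin]
  rfl

lemma count_top (NH f h y : ℕ) (hy : y ≤ f) :
    (univ.filter (fun G : Fin h → (Fin f → Fin NH) =>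
      y ≤ (univ.filter (fun j => ∃ i, PivF (G i) j)).card)).card =
    ∑ e ∈ Finset.Icc y f, Theta NH f h e := by
  classical
  have hpred : ∀ G : Fin h → (Fin f → Fin NH),
      (univ.filter (fun j => ∃ i, PivF (G i) j)) =
        univ.biUnion (fun i => pivSet (G i)) := by
    intro G
    ext j
    simp [pivSet, Finset.mem_biUnion]
  rw [group_count (fun G : Fin h → (Fin f → Fin NH) =>
      (univ.biUnion (fun i => pivSet (G i))).card)
    _ (Finset.Icc y f) (fun G => ?_)]
  · refine Finset.sum_congr rfl (fun e he => ?_)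
    exact count_per_e NH f h e
  · rw [hpred G, Finset.mem_Icc]
    constructor
    · intro hge
      refine ⟨hge, ?_⟩
      calc (univ.biUnion (fun i => pivSet (G i))).card
          ≤ (univ : Finset (Fin f)).card := Finset.card_le_card (Finset.subset_univ _)
        _ = f := by rw [Finset.card_univ, Fintype.card_fin]
    · exact fun hh => hh.1

end Aux



/-- For `N_H ≥ 1`, `f ≥ 1`, `h ≥ 1` and `0 ≤ y ≤ f`, the number of
`h`-tuples of `N_H × f` column-regular binary matrices whose set of initially
extractable columns has cardinality at least `y` equals `Σ_{e=y}^{f} Θ(N_H, f, h, e)`;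
equivalently, under the uniform distribution on all `N_H^{h·f}` such tuples, the
probability that at least `y` columns are initially extractable equals
`Σ_{e=y}^{f} Θ(N_H, f, h, e) / N_H^{h·f}`. -/
theorem count_tuples_at_least_y_extractable (NH f h y : ℕ)
    (hNH : 1 ≤ NH) (hf : 1 ≤ f) (hh : 1 ≤ h) (hy : y ≤ f) :
    Fintype.card {G : Fin h → Matrix (Fin NH) (Fin f) Bool //
        (∀ i, ColRegular (G i)) ∧
        y ≤ (Finset.univ.filter (fun j => Extractable G j)).card} =
      ∑ e ∈ Finset.Icc y f, Theta NH f h e ∧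
    (Fintype.card {G : Fin h → Matrix (Fin NH) (Fin f) Bool //
          (∀ i, ColRegular (G i)) ∧
          y ≤ (Finset.univ.filter (fun j => Extractable G j)).card} : ℚ) /
        (NH : ℚ) ^ (h * f) =
      (∑ e ∈ Finset.Icc y f, (Theta NH f h e : ℚ)) / (NH : ℚ) ^ (h * f) := by
  classical
  let E0 : (Fin f → Fin NH) ≃ {F : Matrix (Fin NH) (Fin f) Bool // ColRegular F} :=
    Equiv.ofBijective _ Aux.toMat_bij
  let AB : (Fin h → (Fin f → Fin NH)) ≃
      {G : Fin h → Matrix (Fin NH) (Fin f) Bool // ∀ i, ColRegular (G i)} :=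
    (Equiv.piCongrRight (fun _ => E0)).trans
      (Equiv.subtypePiEquivPi (p := fun _ F => ColRegular F)).symm
  have hiff : ∀ g : Fin h → (Fin f → Fin NH),
      (y ≤ (Finset.univ.filter (fun j => ∃ i, Aux.PivF (g i) j)).card) ↔
      (y ≤ (Finset.univ.filter (fun j => Extractable (AB g).1 j)).card) := by
    intro g
    have hab : (AB g).1 = fun i => Aux.toMat (g i) := rfl
    have hfil : (Finset.univ.filter (fun j => Extractable (AB g).1 j)) =
        (Finset.univ.filter (fun j => ∃ i, Aux.PivF (g i) j)) := by
      ext j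
      rw [hab]
      simp only [Finset.mem_filter, Finset.mem_univ, true_and, Extractable]
      exact (Finset.mem_filter.trans (and_iff_right (Finset.mem_univ j))).trans
        (exists_congr (fun i => Aux.pivotal_toMat (g i) j))
    rw [hfil]
  let EE : {g : Fin h → (Fin f → Fin NH) //
        y ≤ (Finset.univ.filter (fun j => ∃ i, Aux.PivF (g i) j)).card} ≃
      {G : Fin h → Matrix (Fin NH) (Fin f) Bool //
        (∀ i, ColRegular (G i)) ∧
        y ≤ (Finset.univ.filter (fun j => Extractable G j)).card} :=
    (AB.subtypeEquiv hiff).trans (Equiv.subtypeSubtypeEquivSubtypeInter _ _)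
  have hmain : Fintype.card {G : Fin h → Matrix (Fin NH) (Fin f) Bool //
      (∀ i, ColRegular (G i)) ∧
      y ≤ (Finset.univ.filter (fun j => Extractable G j)).card} =
      ∑ e ∈ Finset.Icc y f, Theta NH f h e := by
    rw [← Nat.card_eq_fintype_card, ← Nat.card_congr EE, Nat.card_eq_fintype_card,
      Fintype.card_of_subtype (Finset.univ.filter (fun g : Fin h → (Fin f → Fin NH) =>
        y ≤ (Finset.univ.filter (fun j => ∃ i, Aux.PivF (g i) j)).card))
        (fun x => by simp), Aux.count_top NH f h y hy]
  exact ⟨hmain, by rw [hmain, Nat.cast_sum]⟩
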